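/- Every Cygan ball is affinely convex: for every ζ₀ ∈ ℂ, t₀ ∈ ℝ and every s > 0, the open Cygan ball B((ζ₀,t₀), s) = {(ζ,t) ∈ ℂ×ℝ : | |ζ−ζ₀|² + i(t−t₀) + 2i·Im(ζ·conj(ζ₀)) | < s} is a convex subset of the real vector space ℂ×ℝ ≅ ℝ³, and likewise the closed Cygan ball {(ζ,t) ∈ ℂ×ℝ : | |ζ−ζ₀|² + i(t−t₀) + 2i·Im(ζ·conj(ζ₀)) | ≤ s} is convex. -/

import Mathlib

noncomputable section

open Complex

/-- The open Cygan ball of squared radius `s` centred at `(ζ₀, t₀)` in the Heisenberg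
group `ℂ × ℝ`:  `{(ζ,t) : | |ζ−ζ₀|² + i(t−t₀) + 2i·Im(ζ·conj ζ₀) | < s}`. -/
def cyganBall (ζ₀ : ℂ) (t₀ : ℝ) (s : ℝ) : Set (ℂ × ℝ) :=
  {p | ‖((‖p.1 - ζ₀‖ ^ 2 : ℝ) : ℂ)
        + Complex.I * ((p.2 - t₀ : ℝ) : ℂ)
        + 2 * Complex.I * (((p.1 * (starRingEnd ℂ) ζ₀).im : ℝ) : ℂ)‖ < s}

/-- The corresponding closed Cygan ball. -/
def closedCyganBall (ζ₀ : ℂ) (t₀ : ℝ) (s : ℝ) : Set (ℂ × ℝ) :=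
  {p | ‖((‖p.1 - ζ₀‖ ^ 2 : ℝ) : ℂ)
        + Complex.I * ((p.2 - t₀ : ℝ) : ℂ)
        + 2 * Complex.I * (((p.1 * (starRingEnd ℂ) ζ₀).im : ℝ) : ℂ)‖ ≤ s}

/-- Comparison of moduli: equal imaginary parts and smaller nonneg real part. -/
lemma cygan_abs_mono {w w' : ℂ} (him : w.im = w'.im) (h0 : 0 ≤ w.re)
    (hre : w.re ≤ w'.re) : ‖w‖ ≤ ‖w'‖ := by
  rw [Complex.norm_def, Complex.norm_def, Complex.normSq_apply, Complex.normSq_apply, him]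
  apply Real.sqrt_le_sqrt
  nlinarith

/-- **All Cygan balls are affinely convex** (Lemma 4.1 of the paper, quoted from
Falbel–Francsics–Parker): every open Cygan ball, and every closed Cygan ball, is a
convex subset of the real vector space `ℂ × ℝ ≅ ℝ³`. -/
theorem cyganBall_convex (ζ₀ : ℂ) (t₀ : ℝ) (s : ℝ) (hs : 0 < s) :
    Convex ℝ (cyganBall ζ₀ t₀ s) ∧ Convex ℝ (closedCyganBall ζ₀ t₀ s) := by
  set Z : ℂ × ℝ → ℂ := fun p =>
    ((‖p.1 - ζ₀‖ ^ 2 : ℝ) : ℂ) + Complex.I * ((p.2 - t₀ : ℝ) : ℂ)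
      + 2 * Complex.I * (((p.1 * (starRingEnd ℂ) ζ₀).im : ℝ) : ℂ) with hZ
  have key : ConvexOn ℝ Set.univ (fun p => ‖Z p‖) := by
    refine ⟨convex_univ, ?_⟩
    intro p _ q _ a b ha hb hab
    set r := a • p + b • q with hrdef
    have habC : (a : ℂ) + (b : ℂ) = 1 := by exact_mod_cast hab
    have hr1 : r.1 = (a : ℂ) * p.1 + (b : ℂ) * q.1 := by
      simp [hrdef, Complex.real_smul]
    have hr2 : r.2 = a * p.2 + b * q.2 := rfl
    set W : ℂ := (a : ℂ) * Z p + (b : ℂ) * Z q with hW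
    have him : (Z r).im = W.im := by
      simp only [hZ, hW, hr1, hr2, Complex.add_im, Complex.mul_im, Complex.ofReal_re,
        Complex.ofReal_im, Complex.I_re, Complex.I_im, Complex.mul_re, add_mul,
        Complex.add_re]
      ring_nf
      linear_combination (t₀ : ℝ) * hab
    have hdiff : r.1 - ζ₀ = (a : ℂ) * (p.1 - ζ₀) + (b : ℂ) * (q.1 - ζ₀) := by
      rw [hr1]; ring_nf; linear_combination ζ₀ * habC
    have htri : ‖r.1 - ζ₀‖ ≤ a * ‖p.1 - ζ₀‖
        + b * ‖q.1 - ζ₀‖ := by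
      rw [hdiff]
      calc ‖(a : ℂ) * (p.1 - ζ₀) + (b : ℂ) * (q.1 - ζ₀)‖
          ≤ ‖(a : ℂ) * (p.1 - ζ₀)‖ + ‖(b : ℂ) * (q.1 - ζ₀)‖ :=
            norm_add_le _ _
        _ = a * ‖p.1 - ζ₀‖ + b * ‖q.1 - ζ₀‖ := by
            simp [map_mul, Complex.norm_real, _root_.abs_of_nonneg ha, _root_.abs_of_nonneg hb]
    have hreW : W.re = a * ‖p.1 - ζ₀‖ ^ 2 + b * ‖q.1 - ζ₀‖ ^ 2 := by
      simp [hW, hZ, Complex.add_re, Complex.mul_re, -Complex.ofReal_pow]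
    have hreZ : (Z r).re = ‖r.1 - ζ₀‖ ^ 2 := by
      simp [hZ, -Complex.ofReal_pow]
    have hre : (Z r).re ≤ W.re := by
      rw [hreZ, hreW]
      nlinarith [norm_nonneg (r.1 - ζ₀), norm_nonneg (p.1 - ζ₀),
        norm_nonneg (q.1 - ζ₀), htri,
        mul_nonneg (mul_nonneg ha hb)
          (sq_nonneg (‖p.1 - ζ₀‖ - ‖q.1 - ζ₀‖))]
    have h1 : ‖Z r‖ ≤ ‖W‖ := by
      apply cygan_abs_mono him _ hre
      rw [hreZ]; positivity
    have h2 : ‖W‖ ≤ a * ‖Z p‖ + b * ‖Z q‖ := by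
      calc ‖W‖ ≤ ‖(a : ℂ) * Z p‖ + ‖(b : ℂ) * Z q‖ :=
            norm_add_le _ _
        _ = a * ‖Z p‖ + b * ‖Z q‖ := by
            simp [map_mul, Complex.norm_real, _root_.abs_of_nonneg ha, _root_.abs_of_nonneg hb]
    exact h1.trans h2
  have h1 := key.convex_lt s
  have h2 := key.convex_le s
  constructor
  · rw [show cyganBall ζ₀ t₀ s = {x | x ∈ Set.univ ∧ ‖Z x‖ < s} from ?_]; exact h1
    ext p; simp [cyganBall, hZ]
  · rw [show closedCyganBall ζ₀ t₀ s = {x | x ∈ Set.univ ∧ ‖Z x‖ ≤ s} from ?_]; exact h2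
    ext p; simp [closedCyganBall, hZ]

end
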